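/- With n'(x) the index satisfying #(n'(x)) ≤ x < #(n'(x)+1), the function log_#(x) = log(#(n'(x))) is asymptotically equivalent to log(x), i.e., lim_{x→∞} log(#(n'(x)))/log(x) = 1. -/

import Mathlib

open Filter Real Finset

/-- The n-th prime number, 1-indexed: `p 1 = 2`, `p 2 = 3`, ... -/
noncomputable def p (n : ℕ) : ℕ := Nat.nth Nat.Prime (n - 1)

/-- The n-th primorial: `primor n = ∏_{i=1}^n p i`. -/
noncomputable def primor (n : ℕ) : ℕ := ∏ i ∈ Finset.Icc 1 n, p i
lemma two_le_p (n : ℕ) : 2 ≤ p n := (Nat.prime_nth_prime (n-1)).two_le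

lemma succ_le_p (n : ℕ) (hn : 1 ≤ n) : n + 1 ≤ p n := by
  have := Nat.add_two_le_nth_prime (n - 1)
  unfold p
  omega

lemma nth_prime_succ_le {k q : ℕ} (hq : q.Prime) (h : Nat.nth Nat.Prime k < q) :
    Nat.nth Nat.Prime (k+1) ≤ q := by
  have h1 : Nat.nth Nat.Prime (Nat.count Nat.Prime q) = q := Nat.nth_count hq
  have h2 : k < Nat.count Nat.Prime q := by
    apply (Nat.nth_lt_nth Nat.infinite_setOf_prime).1
    rw [h1]; exact h
  calc Nat.nth Nat.Prime (k+1) ≤ Nat.nth Nat.Prime (Nat.count Nat.Prime q) :=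
        (Nat.nth_le_nth Nat.infinite_setOf_prime).2 h2
    _ = q := h1

lemma nth_prime_le_two_pow (k : ℕ) : Nat.nth Nat.Prime k ≤ 2 ^ (k+1) := by
  induction k with
  | zero => simp
  | succ k ih =>
    obtain ⟨q, hq, h1, h2⟩ := Nat.exists_prime_lt_and_le_two_mul (Nat.nth Nat.Prime k)
      (Nat.Prime.ne_zero (Nat.prime_nth_prime k))
    calc Nat.nth Nat.Prime (k+1) ≤ q := nth_prime_succ_le hq h1
      _ ≤ 2 * Nat.nth Nat.Prime k := h2
      _ ≤ 2 * 2 ^ (k+1) := by omega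
      _ = 2 ^ (k+2) := by ring

lemma primor_succ (n : ℕ) : primor (n+1) = primor n * p (n+1) := by
  unfold primor
  rw [Finset.prod_Icc_succ_top (by omega)]

lemma primor_pos (n : ℕ) : 0 < primor n :=
  Finset.prod_pos fun i _ => lt_of_lt_of_le two_pos (two_le_p i)

lemma primor_lt_succ (n : ℕ) : primor n < primor (n+1) := by
  rw [primor_succ]
  have := primor_pos n
  have := two_le_p (n+1)
  nlinarith

lemma primor_strictMono : StrictMono primor := strictMono_nat_of_lt_succ primor_lt_succ

lemma primor_lower (n : ℕ) : (n/2 + 1) ^ (n/2) ≤ primor n := by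
  set k := n / 2 with hk
  have h1 : (k + 1) ^ (n - k) ≤ primor n := by
    calc (k+1) ^ (n - k) = ∏ i ∈ Finset.Icc (k+1) n, (k+1) := by
          rw [Finset.prod_const, Nat.card_Icc]; congr 1; omega
      _ ≤ ∏ i ∈ Finset.Icc (k+1) n, p i := by
          apply Finset.prod_le_prod' -- maybe wrong name
          intro i hi
          simp only [Finset.mem_Icc] at hi
          calc k + 1 ≤ i + 1 := by omega
            _ ≤ p i := succ_le_p i (by omega)
      _ ≤ primor n := by
          apply Finset.prod_le_prod_of_subset_of_one_le'
          · intro i hi; simp only [Finset.mem_Icc] at *; omega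
          · intro i _ _; exact le_trans one_le_two (two_le_p i)
  calc (k+1)^k ≤ (k+1)^(n-k) := Nat.pow_le_pow_right (by omega) (by omega)
    _ ≤ primor n := h1

noncomputable def r (n : ℕ) : ℝ := Real.log (p (n+1)) / Real.log (primor n)

lemma r_nonneg (n : ℕ) : 0 ≤ r n := by
  apply div_nonneg
  · exact Real.log_nonneg (by exact_mod_cast le_trans one_le_two (two_le_p (n+1)))
  · exact Real.log_nonneg (by exact_mod_cast primor_pos n)

lemma r_bound (n : ℕ) (hn : 2 ≤ n) : r n ≤ 4 * Real.log 2 / Real.log (n/2 + 1 : ℕ) := by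
  set k := n / 2 with hk
  have hk1 : 1 ≤ k := by omega
  have hlog2 : (0:ℝ) < Real.log 2 := Real.log_pos (by norm_num)
  have hlogk : Real.log 2 ≤ Real.log (k + 1 : ℕ) := by
    apply Real.log_le_log (by norm_num)
    exact_mod_cast by omega
  have hlogkpos : (0:ℝ) < Real.log (k+1 : ℕ) := lt_of_lt_of_le hlog2 hlogk
  have hnum : Real.log (p (n+1)) ≤ 4 * k * Real.log 2 := by
    have h1 : (p (n+1) : ℝ) ≤ 2 ^ (n+1) := by
      have : p (n+1) = Nat.nth Nat.Prime n := rfl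
      rw [this]
      exact_mod_cast nth_prime_le_two_pow n
    calc Real.log (p (n+1)) ≤ Real.log (2 ^ (n+1)) := by
          apply Real.log_le_log (by exact_mod_cast lt_of_lt_of_le two_pos (two_le_p (n+1)))
          exact_mod_cast h1
      _ = (n+1) * Real.log 2 := by rw [Real.log_pow]; push_cast; ring
      _ ≤ 4 * k * Real.log 2 := by
          apply mul_le_mul_of_nonneg_right _ hlog2.le
          have : n + 1 ≤ 4 * k := by omega
          exact_mod_cast this
  have hden : (k : ℝ) * Real.log (k+1 : ℕ) ≤ Real.log (primor n) := by
    calc (k : ℝ) * Real.log (k+1 : ℕ) = Real.log (((k+1 : ℕ) : ℝ) ^ k) := by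
          rw [Real.log_pow]
      _ ≤ Real.log (primor n) := by
          apply Real.log_le_log (by positivity)
          exact_mod_cast primor_lower n
  have hdenpos : (0:ℝ) < (k:ℝ) * Real.log (k+1 : ℕ) := by positivity
  calc r n ≤ (4 * k * Real.log 2) / ((k : ℝ) * Real.log (k+1 : ℕ)) := by
        apply div_le_div₀ (by positivity) hnum hdenpos hden
    _ = 4 * Real.log 2 / Real.log (k+1 : ℕ) := by
        rw [show 4*(k:ℝ)*Real.log 2 = (k:ℝ)*(4*Real.log 2) by ring,
          mul_div_mul_left _ _ (Nat.cast_ne_zero.2 (by omega) : (k:ℝ) ≠ 0)]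


lemma tendsto_r : Tendsto r atTop (nhds 0) := by
  have hb : Tendsto (fun n : ℕ => 4 * Real.log 2 / Real.log (n/2 + 1 : ℕ)) atTop (nhds 0) := by
    apply Tendsto.const_div_atTop
    apply Real.tendsto_log_atTop.comp
    apply tendsto_natCast_atTop_atTop.comp
    exact tendsto_atTop.2 fun N => eventually_atTop.2 ⟨2*N, fun n hn => by omega⟩
  apply squeeze_zero' (Eventually.of_forall r_nonneg) _ hb
  exact eventually_atTop.2 ⟨2, fun n hn => r_bound n hn⟩

theorem stmt_12 (n' : ℝ → ℕ)
    (hn' : ∀ x : ℝ, 2 ≤ x → ((primor (n' x) : ℝ) ≤ x ∧ x < (primor (n' x + 1) : ℝ))) :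
    Tendsto (fun x : ℝ => Real.log (primor (n' x)) / Real.log x) atTop (nhds 1) := by
  have hprimor1 : primor 1 = 2 := by simp [primor, p]
  have hn'top : Tendsto n' atTop atTop := by
    refine tendsto_atTop.2 fun N => ?_
    filter_upwards [eventually_ge_atTop (max 2 (primor (N+1) : ℝ))] with x hx
    have h2x : (2:ℝ) ≤ x := le_trans (le_max_left _ _) hx
    have h1 := (hn' x h2x).2
    have h2 : (primor (N+1) : ℝ) < (primor (n' x + 1) : ℝ) :=
      lt_of_le_of_lt (le_trans (le_max_right _ _) hx) h1
    have h3 : N + 1 < n' x + 1 := primor_strictMono.lt_iff_lt.1 (by exact_mod_cast h2)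
    omega
  have hrc : Tendsto (fun x => r (n' x)) atTop (nhds 0) := tendsto_r.comp hn'top
  have hg : Tendsto (fun x => 1 / (1 + r (n' x))) atTop (nhds 1) := by
    have h1 : Tendsto (fun x => 1 + r (n' x)) atTop (nhds 1) := by
      simpa using tendsto_const_nhds.add hrc
    have := (tendsto_const_nhds (x := (1:ℝ)).div h1 one_ne_zero)
    simpa [Pi.div_def] using this
  apply tendsto_of_tendsto_of_tendsto_of_le_of_le' hg tendsto_const_nhds
  · filter_upwards [eventually_ge_atTop (2:ℝ)] with x hx
    obtain ⟨hl, hu⟩ := hn' x hx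
    have hn1 : 1 ≤ n' x := by
      by_contra h
      have : n' x = 0 := by omega
      rw [this] at hu
      rw [hprimor1] at hu
      norm_num at hu
      linarith
    set L := Real.log (primor (n' x)) with hL
    set c := Real.log (p (n' x + 1)) with hc
    have hLpos : 0 < L := by
      rw [hL]
      apply Real.log_pos
      have : (2:ℕ) ≤ primor (n' x) := hprimor1 ▸ primor_strictMono.monotone hn1
      exact_mod_cast this
    have hcpos : 0 < c := by
      rw [hc]
      apply Real.log_pos
      exact_mod_cast two_le_p (n' x + 1)
    have hlogx : 0 < Real.log x := Real.log_pos (by linarith)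
    have hxlt : Real.log x < L + c := by
      calc Real.log x < Real.log (primor (n' x + 1)) := by
            apply Real.log_lt_log (by linarith) hu
        _ = L + c := by
            rw [primor_succ]
            push_cast
            have hp0 : (p (n' x + 1) : ℝ) ≠ 0 := by
              have := two_le_p (n' x + 1)
              positivity
            have hpr0 : (primor (n' x) : ℝ) ≠ 0 := by
              have := primor_pos (n' x)
              positivity
            rw [Real.log_mul hpr0 hp0]
    have heq : 1 / (1 + r (n' x)) = L / (L + c) := by
      have : r (n' x) = c / L := rfl
      rw [this]
      field_simp
    rw [heq]
    apply div_le_div_of_nonneg_left hLpos.le hlogx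
    linarith
  · filter_upwards [eventually_ge_atTop (2:ℝ)] with x hx
    obtain ⟨hl, hu⟩ := hn' x hx
    have hlogx : 0 < Real.log x := Real.log_pos (by linarith)
    rw [div_le_one hlogx]
    apply Real.log_le_log (by exact_mod_cast primor_pos (n' x)) hl
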